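/- In the complex reflection group G(4,2,2) (matrices of G(4,1,2) with determinant ±1), the element g = diag(i, i) satisfies codim V^g = 2, but g cannot be written as a product of two reflections in G(4,2,2); hence reflection length does not equal fixed-space codimension in general complex reflection groups. -/

import Mathlib

open Module Submodule

/-- `M` is a monomial matrix whose nonzero entries are `r`-th roots of unity, i.e. an
element of `G(r,1,n)` in its natural representation on `ℂⁿ`. -/
def IsMonomialMat (r n : ℕ) (M : Matrix (Fin n) (Fin n) ℂ) : Prop :=
  ∃ (σ : Equiv.Perm (Fin n)) (c : Fin n → ℂ), (∀ j, c j ^ r = 1) ∧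
    ∀ i j, M i j = if i = σ j then c j else 0

/-- Membership in `G(4,2,2)`: an element of `G(4,1,2)` of determinant `±1`. -/
def MemG422 (M : Matrix (Fin 2) (Fin 2) ℂ) : Prop :=
  IsMonomialMat 4 2 M ∧ (M.det = 1 ∨ M.det = -1)

/-- The fixed subspace of a matrix `M` on `ℂ²`. -/
noncomputable def fixedMat (M : Matrix (Fin 2) (Fin 2) ℂ) : Submodule ℂ (Fin 2 → ℂ) :=
  LinearMap.ker (M.mulVecLin - LinearMap.id)

/-- `M` is a reflection in `G(4,2,2)`: a nonidentity element fixing a hyperplane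
(a line in `ℂ²`) pointwise. -/
def IsReflG422 (M : Matrix (Fin 2) (Fin 2) ℂ) : Prop :=
  MemG422 M ∧ M ≠ 1 ∧ finrank ℂ (fixedMat M) = 1

lemma mem_fixedMat {M : Matrix (Fin 2) (Fin 2) ℂ} {x : Fin 2 → ℂ} :
    x ∈ fixedMat M ↔ M.mulVec x = x := by
  rw [fixedMat, LinearMap.mem_ker, LinearMap.sub_apply, Matrix.mulVecLin_apply,
    LinearMap.id_apply, sub_eq_zero]

lemma fixedMat_rank_zero {M : Matrix (Fin 2) (Fin 2) ℂ}
    (h : ∀ x : Fin 2 → ℂ, M.mulVec x = x → x = 0) :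
    finrank ℂ (fixedMat M) = 0 := by
  have : fixedMat M = ⊥ := by
    apply le_antisymm _ bot_le
    intro x hx
    simpa using h x (mem_fixedMat.mp hx)
  rw [this, finrank_bot]

lemma refl_det {M : Matrix (Fin 2) (Fin 2) ℂ} (h : IsReflG422 M) : M.det = -1 := by
  obtain ⟨⟨⟨σ, c, _, hM⟩, hdet⟩, hne, hrank⟩ := h
  rcases hdet with hdet | hdet
  · exfalso
    have h0 : σ 0 = 0 ∨ σ 0 = 1 := by omega
    rcases h0 with h0 | h0
    · -- diagonal case
      have h1 : σ 1 = 1 := by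
        have := σ.injective.ne (show (0 : Fin 2) ≠ 1 by decide)
        rw [h0] at this
        omega
      have e00 : M 0 0 = c 0 := by rw [hM, h0]; simp
      have e01 : M 0 1 = 0 := by rw [hM, h1]; simp
      have e10 : M 1 0 = 0 := by rw [hM, h0]; simp
      have e11 : M 1 1 = c 1 := by rw [hM, h1]; simp
      have hd : c 0 * c 1 = 1 := by
        rw [Matrix.det_fin_two, e00, e01, e10, e11] at hdet
        linear_combination hdet
      by_cases hc0 : c 0 = 1
      · have hc1 : c 1 = 1 := by
          rw [hc0, one_mul] at hd; exact hd
        apply hne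
        ext i j
        fin_cases i <;> fin_cases j <;>
          simp [e00, e01, e10, e11, hc0, hc1, Matrix.one_apply]
      · have hc1 : c 1 ≠ 1 := by
          intro hc1
          rw [hc1, mul_one] at hd
          exact hc0 hd
        have : finrank ℂ (fixedMat M) = 0 := by
          apply fixedMat_rank_zero
          intro x hx
          have hx0 := congrFun hx 0
          have hx1 := congrFun hx 1
          simp [Matrix.mulVec, dotProduct, Fin.sum_univ_two,
            e00, e01, e10, e11] at hx0 hx1
          have hx0' : x 0 = 0 := by
            have h' : (c 0 - 1) * x 0 = 0 := by linear_combination hx0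
            rcases mul_eq_zero.mp h' with h | h
            · exact absurd (by linear_combination h) hc0
            · exact h
          have hx1' : x 1 = 0 := by
            have h' : (c 1 - 1) * x 1 = 0 := by linear_combination hx1
            rcases mul_eq_zero.mp h' with h | h
            · exact absurd (by linear_combination h) hc1
            · exact h
          funext i
          fin_cases i <;> simp [hx0', hx1']
        rw [this] at hrank
        exact absurd hrank (by norm_num)
    · -- antidiagonal case
      have h1 : σ 1 = 0 := by
        have := σ.injective.ne (show (0 : Fin 2) ≠ 1 by decide)
        rw [h0] at this
        omega
      have e00 : M 0 0 = 0 := by rw [hM, h0]; simp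
      have e01 : M 0 1 = c 1 := by rw [hM, h1]; simp
      have e10 : M 1 0 = c 0 := by rw [hM, h0]; simp
      have e11 : M 1 1 = 0 := by rw [hM, h1]; simp
      have hd : c 0 * c 1 = -1 := by
        rw [Matrix.det_fin_two, e00, e01, e10, e11] at hdet
        linear_combination -hdet
      have : finrank ℂ (fixedMat M) = 0 := by
        apply fixedMat_rank_zero
        intro x hx
        have hx0 := congrFun hx 0
        have hx1 := congrFun hx 1
        simp [Matrix.mulVec, dotProduct, Fin.sum_univ_two,
          e00, e01, e10, e11] at hx0 hx1
        -- c 1 * x 1 = x 0, c 0 * x 0 = x 1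
        have hxx : x 1 = - x 1 := by
          calc x 1 = c 0 * x 0 := hx1.symm
            _ = c 0 * (c 1 * x 1) := by rw [hx0]
            _ = (c 0 * c 1) * x 1 := by ring
            _ = - x 1 := by rw [hd]; ring
        have h1' : x 1 = 0 := by
          have : (2 : ℂ) * x 1 = 0 := by linear_combination hxx
          simpa using this
        have h0' : x 0 = 0 := by rw [← hx0, h1', mul_zero]
        funext i
        fin_cases i <;> simp [h0', h1']
      rw [this] at hrank
      exact absurd hrank (by norm_num)
  · exact hdet

/-- In `G(4,2,2)`, the element `g = diag(i,i)` has `codim V^g = 2` (its fixed space is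
zero), yet it is not a product of two reflections of `G(4,2,2)`; so reflection length
need not equal the codimension of the fixed space for complex reflection groups. -/
theorem G422_counterexample :
    MemG422 (Matrix.diagonal (fun _ => Complex.I)) ∧
    finrank ℂ (fixedMat (Matrix.diagonal (fun _ => Complex.I))) = 0 ∧
    ¬ ∃ s t : Matrix (Fin 2) (Fin 2) ℂ, IsReflG422 s ∧ IsReflG422 t ∧
        s * t = Matrix.diagonal (fun _ => Complex.I) := by
  have hdet : (Matrix.diagonal (fun _ => Complex.I) : Matrix (Fin 2) (Fin 2) ℂ).det = -1 := by
    rw [Matrix.det_diagonal]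
    simp [Fin.prod_univ_two, Complex.I_mul_I]
  refine ⟨⟨⟨Equiv.refl (Fin 2), fun _ => Complex.I, fun _ => ?_, fun i j => ?_⟩,
      Or.inr hdet⟩, ?_, ?_⟩
  · norm_num [show (4:ℕ) = 2*2 from rfl, pow_mul, Complex.I_sq]
  · by_cases h : i = j <;> simp [Matrix.diagonal_apply, h]
  · apply fixedMat_rank_zero
    intro x hx
    funext i
    have := congrFun hx i
    simp [Matrix.mulVec_diagonal] at this
    have : (Complex.I - 1) * x i = 0 := by linear_combination this
    rcases mul_eq_zero.mp this with h | h
    · exact absurd (show Complex.I = 1 by linear_combination h)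
        (by simp [Complex.ext_iff])
    · simpa using h
  · rintro ⟨s, t, hs, ht, hst⟩
    have h2 := congrArg Matrix.det hst
    rw [Matrix.det_mul, refl_det hs, refl_det ht, hdet] at h2
    norm_num at h2
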